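/- (Weyl equidistribution) Let x be an irrational real number and 0 ≤ a ≤ b ≤ 1. Let Sₙ(x) = #{k ∈ {1, …, n} : {kx} ∈ [a, b]}, where {z} denotes the fractional part of z. Then Sₙ(x)/n → b − a as n → ∞. -/

import Mathlib

open Filter Topology


open Filter Topology MeasureTheory Set

instance weylFactZeroLtOne : Fact ((0:ℝ) < 1) := ⟨one_pos⟩

noncomputable section

instance : IsProbabilityMeasure (volume : Measure (AddCircle (1:ℝ))) :=
  ⟨by simp⟩

/-- integral of nonzero fourier mode vanishes -/
lemma weyl_integral_fourier_zero {m : ℤ} (hm : m ≠ 0) :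
    ∫ y : AddCircle (1:ℝ), fourier m y = 0 := by
  have h1 : ∫ y : AddCircle (1:ℝ), fourier m (y + (((1:ℝ)/2/m : ℝ) : AddCircle (1:ℝ)))
      = ∫ y : AddCircle (1:ℝ), fourier m y :=
    integral_add_right_eq_self _ _
  have h2 : ∀ y : AddCircle (1:ℝ), fourier m (y + (((1:ℝ)/2/m : ℝ) : AddCircle (1:ℝ))) = - fourier m y :=
    fun y => fourier_add_half_inv_index hm one_pos y
  simp_rw [h2, integral_neg] at h1
  linear_combination -h1/2

/-- Weyl averages for a single Fourier mode. -/
lemma weyl_fourier_avg (x : ℝ) (hx : Irrational x) (m : ℤ) :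
    Tendsto (fun n : ℕ => (∑ k ∈ Finset.Icc 1 n,
        fourier m (((k : ℝ) * x : ℝ) : AddCircle (1:ℝ))) / (n : ℂ))
      atTop (𝓝 (∫ y : AddCircle (1:ℝ), fourier m y)) := by
  rcases eq_or_ne m 0 with rfl | hm
  · have hint : (∫ y : AddCircle (1:ℝ), fourier 0 y) = 1 := by
      simp [fourier_zero]
    rw [hint]
    have : ∀ n : ℕ, (∑ k ∈ Finset.Icc 1 n,
        fourier (0:ℤ) (((k : ℝ) * x : ℝ) : AddCircle (1:ℝ))) / (n : ℂ) = (n : ℂ) / n := by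
      intro n
      simp [fourier_zero, Nat.card_Icc]
    simp_rw [this]
    have : Tendsto (fun n : ℕ => (n : ℂ) / n) atTop (𝓝 1) := by
      apply tendsto_nhds_of_eventually_eq
      filter_upwards [eventually_ne_atTop 0] with n hn
      rw [div_self (by exact_mod_cast hn)]
    exact this
  · rw [weyl_integral_fourier_zero hm]
    set w : ℂ := Complex.exp (2 * Real.pi * Complex.I * m * x) with hw
    have hfou : ∀ k : ℕ, fourier m (((k : ℝ) * x : ℝ) : AddCircle (1:ℝ)) = w ^ k := by
      intro k
      rw [fourier_coe_apply, hw, ← Complex.exp_nat_mul]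
      congr 1
      push_cast
      ring
    have hwabs : ‖w‖ = 1 := by
      rw [hw, Complex.norm_exp]
      norm_num [Complex.mul_re, Complex.mul_im, Real.exp_zero]
    have hw1 : w ≠ 1 := by
      intro h
      rw [hw, Complex.exp_eq_one_iff] at h
      obtain ⟨n, hn⟩ := h
      have h2 : ((m : ℝ) * x : ℝ) = (n : ℝ) := by
        have hpi : (2 * (Real.pi:ℂ) * Complex.I) ≠ 0 := by
          simp [Real.pi_ne_zero, Complex.I_ne_zero]
        have : ((m : ℂ) * x) = n := by
          apply mul_left_cancel₀ hpi
          rw [show (2 * (Real.pi:ℂ) * Complex.I) * ((m:ℂ) * x)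
                = 2 * (Real.pi:ℂ) * Complex.I * m * x by ring, hn]; ring
        exact_mod_cast this
      exact (hx.intCast_mul hm).ne_int n h2
    -- norm bound on the partial sums
    have hbound : ∀ n : ℕ, ‖∑ k ∈ Finset.Icc 1 n, w ^ k‖ ≤ 2 / ‖w - 1‖ := by
      intro n
      have hsum : ∑ k ∈ Finset.Icc 1 n, w ^ k = w * ((w ^ n - 1) / (w - 1)) := by
        have h1 : ∑ k ∈ Finset.Icc 1 n, w ^ k = ∑ k ∈ Finset.range n, w ^ (k + 1) := by
          rw [Finset.range_eq_Ico]
          rw [Finset.sum_Ico_eq_sum_range]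
          have : Finset.Icc 1 n = Finset.Ico 1 (n+1) := by
            ext k; simp [Nat.lt_succ_iff]
          rw [this, Finset.sum_Ico_eq_sum_range]
          simp [add_comm]
        rw [h1]
        simp_rw [pow_succ, ← Finset.sum_mul]
        rw [geom_sum_eq hw1]
        ring
      rw [hsum, norm_mul]
      have hnw : ‖w‖ = 1 := hwabs
      rw [hnw, one_mul, norm_div]
      have h2 : ‖w ^ n - 1‖ ≤ 2 := by
        calc ‖w ^ n - 1‖ ≤ ‖w ^ n‖ + ‖(1:ℂ)‖ := norm_sub_le _ _
        _ = 2 := by rw [norm_pow, hnw]; norm_num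
      have hw1' : 0 < ‖w - 1‖ := by
        rw [norm_pos_iff]; exact sub_ne_zero.mpr hw1
      exact div_le_div_of_nonneg_right h2 hw1'.le |>.trans_eq rfl
    simp_rw [hfou]
    have : Tendsto (fun n : ℕ => (2 / ‖w - 1‖) / (n:ℝ)) atTop (𝓝 0) :=
      tendsto_const_div_atTop_nhds_zero_nat _
    apply squeeze_zero_norm ?_ this
    intro n
    rw [norm_div]
    simp only [Complex.norm_natCast]
    rcases Nat.eq_zero_or_pos n with rfl | hn
    · simp
    · exact div_le_div_of_nonneg_right (hbound n) (by positivity) |>.trans_eq rfl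

lemma weyl_integrable {E : Type*} [NormedAddCommGroup E] (f : C(AddCircle (1:ℝ), E)) :
    Integrable f (volume : Measure (AddCircle (1:ℝ))) :=
  f.continuous.integrable_of_hasCompactSupport (isClosed_tsupport _).isCompact

/-- Weyl averages for all continuous complex functions. -/
lemma weyl_cont_avg (x : ℝ) (hx : Irrational x) (f : C(AddCircle (1:ℝ), ℂ)) :
    Tendsto (fun n : ℕ => (∑ k ∈ Finset.Icc 1 n,
        f (((k : ℝ) * x : ℝ) : AddCircle (1:ℝ))) / (n : ℂ))
      atTop (𝓝 (∫ y : AddCircle (1:ℝ), f y)) := by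
  set P : C(AddCircle (1:ℝ), ℂ) → Prop := fun f =>
    Tendsto (fun n : ℕ => (∑ k ∈ Finset.Icc 1 n,
      f (((k : ℝ) * x : ℝ) : AddCircle (1:ℝ))) / (n : ℂ))
      atTop (𝓝 (∫ y : AddCircle (1:ℝ), f y)) with hP
  have hspan : ∀ g ∈ Submodule.span ℂ (Set.range (@fourier 1)), P g := by
    intro g hg
    induction hg using Submodule.span_induction with
    | mem g hg => obtain ⟨m, rfl⟩ := hg; exact weyl_fourier_avg x hx m
    | zero => simpa [hP] using tendsto_const_nhds
    | add g h _ _ hg hh =>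
      have := hg.add hh
      simp only [hP, ContinuousMap.add_apply] at *
      rw [integral_add (weyl_integrable g) (weyl_integrable h)]
      simp_rw [Finset.sum_add_distrib, add_div]
      exact this
    | smul c g _ hg =>
      have := hg.const_mul c
      simp only [hP, ContinuousMap.smul_apply, smul_eq_mul] at *
      rw [show (∫ y : AddCircle (1:ℝ), c * g y) = c * ∫ y : AddCircle (1:ℝ), g y from
        integral_const_mul c _]
      simp_rw [← Finset.mul_sum, mul_div_assoc]
      exact this
  -- density step
  rw [Metric.tendsto_atTop]
  intro ε hε
  have hf : f ∈ closure ((Submodule.span ℂ (Set.range (@fourier 1)) : Set _)) := by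
    have : f ∈ (Submodule.span ℂ (Set.range (@fourier 1))).topologicalClosure := by
      rw [span_fourier_closure_eq_top]; trivial
    exact this
  rw [Metric.mem_closure_iff] at hf
  obtain ⟨g, hg, hfg⟩ := hf (ε/4) (by linarith)
  have hgood := hspan g hg
  rw [hP, Metric.tendsto_atTop] at hgood
  obtain ⟨N, hN⟩ := hgood (ε/4) (by linarith)
  refine ⟨N, fun n hn => ?_⟩
  have hdist : dist f g < ε/4 := hfg
  have hnorm : ‖f - g‖ < ε/4 := by rwa [← dist_eq_norm]
  -- pointwise bound
  have hpt : ∀ y : AddCircle (1:ℝ), ‖f y - g y‖ ≤ ‖f - g‖ := by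
    intro y
    calc ‖f y - g y‖ = ‖(f - g) y‖ := by simp
    _ ≤ ‖f - g‖ := ContinuousMap.norm_coe_le_norm _ _
  -- average difference bound
  have havg : ‖(∑ k ∈ Finset.Icc 1 n, f (((k : ℝ) * x : ℝ) : AddCircle (1:ℝ))) / (n : ℂ)
      - (∑ k ∈ Finset.Icc 1 n, g (((k : ℝ) * x : ℝ) : AddCircle (1:ℝ))) / (n : ℂ)‖
      ≤ ‖f - g‖ := by
    rw [div_sub_div_same, ← Finset.sum_sub_distrib, norm_div]
    simp only [Complex.norm_natCast]
    rcases Nat.eq_zero_or_pos n with rfl | hn0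
    · simp [norm_nonneg]
    · have hsum : ‖∑ k ∈ Finset.Icc 1 n,
          (f (((k : ℝ) * x : ℝ) : AddCircle (1:ℝ)) - g (((k : ℝ) * x : ℝ) : AddCircle (1:ℝ)))‖
          ≤ (n : ℝ) * ‖f - g‖ := by
        calc _ ≤ ∑ k ∈ Finset.Icc 1 n, ‖f (((k : ℝ) * x : ℝ) : AddCircle (1:ℝ))
            - g (((k : ℝ) * x : ℝ) : AddCircle (1:ℝ))‖ := norm_sum_le _ _
        _ ≤ ∑ k ∈ Finset.Icc 1 n, ‖f - g‖ := Finset.sum_le_sum (fun k _ => hpt _)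
        _ = (n : ℝ) * ‖f - g‖ := by simp [Nat.card_Icc]
      rw [div_le_iff₀ (by positivity)]
      calc _ ≤ (n:ℝ) * ‖f - g‖ := hsum
      _ = ‖f - g‖ * n := by ring
  -- integral difference bound
  have hint : ‖(∫ y : AddCircle (1:ℝ), f y) - ∫ y : AddCircle (1:ℝ), g y‖ ≤ ‖f - g‖ := by
    rw [← integral_sub (weyl_integrable f) (weyl_integrable g)]
    calc ‖∫ y : AddCircle (1:ℝ), (f y - g y)‖
        ≤ ‖f - g‖ * (volume (Set.univ : Set (AddCircle (1:ℝ)))).toReal :=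
          norm_integral_le_of_norm_le_const (Eventually.of_forall hpt)
    _ = ‖f - g‖ := by simp
  have h2 := hN n hn
  rw [dist_eq_norm] at h2 ⊢
  calc ‖(∑ k ∈ Finset.Icc 1 n, f (((k : ℝ) * x : ℝ) : AddCircle (1:ℝ))) / (n : ℂ)
        - ∫ y : AddCircle (1:ℝ), f y‖
      ≤ ‖(∑ k ∈ Finset.Icc 1 n, f (((k : ℝ) * x : ℝ) : AddCircle (1:ℝ))) / (n : ℂ)
        - (∑ k ∈ Finset.Icc 1 n, g (((k : ℝ) * x : ℝ) : AddCircle (1:ℝ))) / (n : ℂ)‖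
      + ‖(∑ k ∈ Finset.Icc 1 n, g (((k : ℝ) * x : ℝ) : AddCircle (1:ℝ))) / (n : ℂ)
        - ∫ y : AddCircle (1:ℝ), g y‖
      + ‖(∫ y : AddCircle (1:ℝ), g y) - ∫ y : AddCircle (1:ℝ), f y‖ := by
        have := norm_add₃_le (a := (∑ k ∈ Finset.Icc 1 n, f (((k : ℝ) * x : ℝ) : AddCircle (1:ℝ))) / (n : ℂ)
          - (∑ k ∈ Finset.Icc 1 n, g (((k : ℝ) * x : ℝ) : AddCircle (1:ℝ))) / (n : ℂ))
          (b := (∑ k ∈ Finset.Icc 1 n, g (((k : ℝ) * x : ℝ) : AddCircle (1:ℝ))) / (n : ℂ)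
          - ∫ y : AddCircle (1:ℝ), g y)
          (c := (∫ y : AddCircle (1:ℝ), g y) - ∫ y : AddCircle (1:ℝ), f y)
        simpa using this
  _ < ε := by
      have hgf : ‖(∫ y : AddCircle (1:ℝ), g y) - ∫ y : AddCircle (1:ℝ), f y‖ ≤ ‖f - g‖ := by
        rw [norm_sub_rev]; exact hint
      linarith

/-- Weyl averages for continuous real functions. -/
lemma weyl_cont_avg_real (x : ℝ) (hx : Irrational x) (f : C(AddCircle (1:ℝ), ℝ)) :
    Tendsto (fun n : ℕ => (∑ k ∈ Finset.Icc 1 n,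
        f (((k : ℝ) * x : ℝ) : AddCircle (1:ℝ))) / (n : ℝ))
      atTop (𝓝 (∫ y : AddCircle (1:ℝ), f y)) := by
  let F : C(AddCircle (1:ℝ), ℂ) :=
    ⟨fun y => (f y : ℂ), Complex.continuous_ofReal.comp f.continuous⟩
  have hC := weyl_cont_avg x hx F
  have hint : (∫ y : AddCircle (1:ℝ), F y) = ((∫ y : AddCircle (1:ℝ), f y : ℝ) : ℂ) := by
    exact integral_ofReal
  rw [hint] at hC
  have := (Complex.continuous_re.tendsto _).comp hC
  convert this using 2 with n
  simp only [Function.comp_apply, F, ContinuousMap.coe_mk]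
  rw [← Complex.ofReal_sum, ← Complex.ofReal_natCast, ← Complex.ofReal_div, Complex.ofReal_re]
  exact (Complex.ofReal_re _).symm

lemma weyl_coe_eq_coe {u v : ℝ} :
    (u : AddCircle (1:ℝ)) = (v : AddCircle (1:ℝ)) ↔ ∃ n : ℤ, v = u + n := by
  rw [QuotientAddGroup.eq]
  constructor
  · rintro h
    rw [AddSubgroup.mem_zmultiples_iff] at h
    obtain ⟨n, hn⟩ := h
    exact ⟨n, by simp at hn; linarith⟩
  · rintro ⟨n, rfl⟩
    rw [AddSubgroup.mem_zmultiples_iff]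
    exact ⟨n, by simp⟩

lemma weyl_mem_arc {a b y : ℝ} (ha : 0 ≤ a) (hb : b ≤ 1) (hy : Irrational y) :
    ((y : ℝ) : AddCircle (1:ℝ)) ∈ (fun t : ℝ => (t : AddCircle (1:ℝ))) '' Set.Icc a b
      ↔ (a ≤ Int.fract y ∧ Int.fract y ≤ b) := by
  constructor
  · rintro ⟨z, hz, hzy⟩
    rw [weyl_coe_eq_coe] at hzy
    obtain ⟨n, rfl⟩ := hzy
    rw [Int.fract_add_intCast]
    have hz_irr : Irrational z := by
      rwa [irrational_add_intCast_iff] at hy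
    have hz1 : z ≠ 1 := by
      intro h; exact hz_irr.ne_int 1 (by rw [h]; norm_num)
    have hfz : Int.fract z = z :=
      Int.fract_eq_self.mpr ⟨le_trans ha hz.1,
        lt_of_le_of_ne (le_trans hz.2 hb) hz1⟩
    rw [hfz]; exact hz
  · rintro ⟨h1, h2⟩
    refine ⟨Int.fract y, ⟨h1, h2⟩, ?_⟩
    rw [weyl_coe_eq_coe]
    exact ⟨⌊y⌋, by rw [Int.fract]; ring⟩

lemma weyl_arc_compact (a b : ℝ) :
    IsCompact ((fun t : ℝ => (t : AddCircle (1:ℝ))) '' Set.Icc a b) :=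
  isCompact_Icc.image (AddCircle.continuous_mk' 1)

lemma weyl_measure_arc_le {a b : ℝ} (ha : 0 ≤ a) (hab : a ≤ b) (hb : b ≤ 1) :
    volume ((fun t : ℝ => (t : AddCircle (1:ℝ))) '' Set.Icc a b)
      ≤ ENNReal.ofReal (b - a) := by
  have hmeas : MeasurableSet ((fun t : ℝ => (t : AddCircle (1:ℝ))) '' Set.Icc a b) :=
    (weyl_arc_compact a b).isClosed.measurableSet
  rw [AddCircle.add_projection_respects_measure 1 (b-1) hmeas]
  have hsub : (QuotientAddGroup.mk ⁻¹' ((fun t : ℝ => (t : AddCircle (1:ℝ))) '' Set.Icc a b))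
      ∩ Set.Ioc (b-1) (b-1+1) ⊆ Set.Icc a b := by
    rintro y ⟨hy1, hy2⟩
    obtain ⟨z, hz, hzy⟩ := hy1
    rw [weyl_coe_eq_coe] at hzy
    obtain ⟨n, rfl⟩ := hzy
    have h1 : (-1 : ℝ) < n := by
      have := hy2.1; have := hz.2; simp only [Set.mem_Ioc] at *; linarith
    have h2 : (n : ℝ) ≤ 1 := by
      have := hy2.2; have := hz.1; simp only [Set.mem_Ioc] at *; linarith
    have hn : n = 0 ∨ n = 1 := by
      have h1' : (-1 : ℤ) < n := by exact_mod_cast h1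
      have h2' : n ≤ (1 : ℤ) := by exact_mod_cast h2
      omega
    rcases hn with rfl | rfl
    · simpa using hz
    · have hy2' := hy2.2
      have hz1 := hz.1
      have hz2 := hz.2
      simp only [Int.cast_one] at *
      constructor <;> [linarith; linarith]
  calc volume ((QuotientAddGroup.mk ⁻¹' ((fun t : ℝ => (t : AddCircle (1:ℝ))) '' Set.Icc a b))
      ∩ Set.Ioc (b-1) (b-1+1))
      ≤ volume (Set.Icc a b) := measure_mono hsub
  _ = ENNReal.ofReal (b - a) := Real.volume_Icc

lemma weyl_measure_arc_ge {s t : ℝ} (hs : 0 ≤ s) (ht : t ≤ 1) :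
    ENNReal.ofReal (t - s)
      ≤ volume ((fun u : ℝ => (u : AddCircle (1:ℝ))) '' Set.Icc s t) := by
  have hmeas : MeasurableSet ((fun u : ℝ => (u : AddCircle (1:ℝ))) '' Set.Icc s t) :=
    (weyl_arc_compact s t).isClosed.measurableSet
  rw [AddCircle.add_projection_respects_measure 1 (t-1) hmeas]
  have hsub : Set.Ioc s t ⊆
      (QuotientAddGroup.mk ⁻¹' ((fun u : ℝ => (u : AddCircle (1:ℝ))) '' Set.Icc s t))
      ∩ Set.Ioc (t-1) (t-1+1) := by
    rintro y hy
    refine ⟨⟨y, ⟨le_of_lt hy.1, hy.2⟩, rfl⟩, ?_⟩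
    constructor
    · have := hy.1; linarith [hs.trans (le_of_lt hy.1)]
    · have := hy.2; linarith
  calc ENNReal.ofReal (t - s) = volume (Set.Ioc s t) := Real.volume_Ioc.symm
  _ ≤ _ := measure_mono hsub

lemma weyl_upper_fn {a b : ℝ} (ha : 0 ≤ a) (hab : a ≤ b) (hb : b ≤ 1)
    {ε : ℝ} (hε : 0 < ε) :
    ∃ g : C(AddCircle (1:ℝ), ℝ),
      (∀ y ∈ (fun t : ℝ => (t : AddCircle (1:ℝ))) '' Set.Icc a b, 1 ≤ g y) ∧
      (∀ y, 0 ≤ g y) ∧ (∫ y : AddCircle (1:ℝ), g y) ≤ b - a + ε := by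
  set I : Set (AddCircle (1:ℝ)) := (fun t : ℝ => (t : AddCircle (1:ℝ))) '' Set.Icc a b with hI
  have hIlt : volume I < ENNReal.ofReal (b - a + ε) := by
    calc volume I ≤ ENNReal.ofReal (b - a) := weyl_measure_arc_le ha hab hb
    _ < ENNReal.ofReal (b - a + ε) := by
        rw [ENNReal.ofReal_lt_ofReal_iff (by linarith)]; linarith
  obtain ⟨U, hIU, hUopen, hUlt⟩ := I.exists_isOpen_lt_of_lt _ hIlt
  obtain ⟨g, hg0, hg1, hg01⟩ := exists_continuous_zero_one_of_isCompact'
    (weyl_arc_compact a b) (hUopen.isClosed_compl)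
    (Set.disjoint_compl_right_iff_subset.mpr hIU)
  refine ⟨g, fun y hy => (hg1 hy).ge, fun y => (hg01 y).1, ?_⟩
  have hle : ∀ y, g y ≤ U.indicator (fun _ => (1:ℝ)) y := by
    intro y
    by_cases hy : y ∈ U
    · rw [Set.indicator_of_mem hy]; exact (hg01 y).2
    · rw [Set.indicator_of_notMem hy]
      have : g y = 0 := hg0 hy
      simp [this]
  calc (∫ y : AddCircle (1:ℝ), g y)
      ≤ ∫ y : AddCircle (1:ℝ), U.indicator (fun _ => (1:ℝ)) y :=
        integral_mono (weyl_integrable g)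
          ((integrable_const (1:ℝ)).indicator hUopen.measurableSet) hle
  _ = (volume U).toReal := by
      rw [integral_indicator_const (1:ℝ) hUopen.measurableSet]; simp; rfl
  _ ≤ b - a + ε := ENNReal.toReal_le_of_le_ofReal (by linarith) hUlt.le

lemma weyl_lower_fn {a b : ℝ} (ha : 0 ≤ a) (hb : b ≤ 1)
    {ε : ℝ} (hε : 0 < ε) (hba : a + ε/2 ≤ b - ε/2) :
    ∃ h : C(AddCircle (1:ℝ), ℝ),
      (∀ y, 0 ≤ h y ∧ h y ≤ 1) ∧
      (∀ y, y ∉ (fun t : ℝ => (t : AddCircle (1:ℝ))) '' Set.Icc a b → h y = 0) ∧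
      b - a - ε ≤ (∫ y : AddCircle (1:ℝ), h y) := by
  set J : Set (AddCircle (1:ℝ)) :=
    (fun t : ℝ => (t : AddCircle (1:ℝ))) '' Set.Icc (a + ε/2) (b - ε/2) with hJ
  set U : Set (AddCircle (1:ℝ)) := (fun t : ℝ => (t : AddCircle (1:ℝ))) '' Set.Ioo a b with hU
  have hUopen : IsOpen U := QuotientAddGroup.isOpenMap_coe _ isOpen_Ioo
  have hJU : J ⊆ U := by
    apply Set.image_mono
    intro z hz
    exact ⟨by linarith [hz.1], by linarith [hz.2]⟩
  obtain ⟨h, hh0, hh1, hh01⟩ := exists_continuous_zero_one_of_isCompact'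
    (weyl_arc_compact (a + ε/2) (b - ε/2)) (hUopen.isClosed_compl)
    (Set.disjoint_compl_right_iff_subset.mpr hJU)
  refine ⟨h, fun y => hh01 y, fun y hy => ?_, ?_⟩
  · apply hh0
    intro hyU
    exact hy (Set.image_mono Set.Ioo_subset_Icc_self hyU)
  · have hge : ∀ y, J.indicator (fun _ => (1:ℝ)) y ≤ h y := by
      intro y
      by_cases hy : y ∈ J
      · rw [Set.indicator_of_mem hy]; exact (hh1 hy).ge
      · rw [Set.indicator_of_notMem hy]; exact (hh01 y).1
    have hJmeas : MeasurableSet J := (weyl_arc_compact _ _).isClosed.measurableSet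
    calc b - a - ε = (ENNReal.ofReal ((b - ε/2) - (a + ε/2))).toReal := by
          rw [ENNReal.toReal_ofReal (by linarith)]; ring
    _ ≤ (volume J).toReal := by
        apply ENNReal.toReal_mono (measure_ne_top _ _)
        exact weyl_measure_arc_ge (by linarith) (by linarith)
    _ = ∫ y : AddCircle (1:ℝ), J.indicator (fun _ => (1:ℝ)) y := by
        rw [integral_indicator_const (1:ℝ) hJmeas]; simp; rfl
    _ ≤ _ := integral_mono ((integrable_const (1:ℝ)).indicator hJmeas)
          (weyl_integrable h) hge


end

/-- **Weyl's equidistribution theorem.** Let `x` be irrational and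
`0 ≤ a ≤ b ≤ 1`. Let `Sₙ(x)` be the number of `k ∈ {1, …, n}` with
`{kx} ∈ [a, b]`, where `{z}` is the fractional part. Then
`Sₙ(x)/n → b − a` as `n → ∞`. -/
theorem weyl_equidistribution (x : ℝ) (hx : Irrational x)
    (a b : ℝ) (ha : 0 ≤ a) (hab : a ≤ b) (hb : b ≤ 1) :
    Tendsto
      (fun n : ℕ =>
        (((Finset.Icc 1 n).filter
            (fun k : ℕ => a ≤ Int.fract ((k : ℝ) * x) ∧ Int.fract ((k : ℝ) * x) ≤ b)).card : ℝ) / n)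
      atTop (𝓝 (b - a)) := by
  set I : Set (AddCircle (1:ℝ)) := (fun t : ℝ => (t : AddCircle (1:ℝ))) '' Set.Icc a b with hI
  set cond : ℕ → Prop :=
    fun k => a ≤ Int.fract ((k : ℝ) * x) ∧ Int.fract ((k : ℝ) * x) ≤ b with hcond
  have hcondI : ∀ k : ℕ, k ≠ 0 → (cond k ↔ (((k : ℝ) * x : ℝ) : AddCircle (1:ℝ)) ∈ I) := by
    intro k hk
    exact (weyl_mem_arc ha hb (hx.natCast_mul hk)).symm
  have hcard : ∀ n : ℕ, (((Finset.Icc 1 n).filter (fun k => cond k)).card : ℝ)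
      = ∑ k ∈ Finset.Icc 1 n, (if cond k then (1:ℝ) else 0) := by
    intro n
    rw [Finset.sum_boole]
  rw [Metric.tendsto_atTop]
  intro ε hε
  -- upper function
  obtain ⟨g, hgI, hg0, hgint⟩ := weyl_upper_fn ha hab hb (half_pos hε)
  have hgtend := weyl_cont_avg_real x hx g
  rw [Metric.tendsto_atTop] at hgtend
  obtain ⟨N₁, hN₁⟩ := hgtend (ε/2) (half_pos hε)
  -- lower bound: two cases
  by_cases hsmall : b - a < ε/2
  · -- trivial lower bound
    refine ⟨max N₁ 1, fun n hn => ?_⟩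
    have hn1 : 1 ≤ n := le_trans (le_max_right _ _) hn
    have hnN₁ : N₁ ≤ n := le_trans (le_max_left _ _) hn
    have hnpos : (0:ℝ) < n := by exact_mod_cast hn1
    have hupper : (((Finset.Icc 1 n).filter (fun k => cond k)).card : ℝ) / n
        ≤ (∑ k ∈ Finset.Icc 1 n, g (((k : ℝ) * x : ℝ) : AddCircle (1:ℝ))) / n := by
      apply div_le_div_of_nonneg_right ?_ hnpos.le
      rw [hcard]
      apply Finset.sum_le_sum
      intro k hk
      have hk0 : k ≠ 0 := by
        have := (Finset.mem_Icc.mp hk).1; omega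
      by_cases hc : cond k
      · rw [if_pos hc]
        exact hgI _ ((hcondI k hk0).mp hc)
      · rw [if_neg hc]; exact hg0 _
    have hg_close := hN₁ n hnN₁
    rw [Real.dist_eq] at hg_close
    have hgavg : (∑ k ∈ Finset.Icc 1 n, g (((k : ℝ) * x : ℝ) : AddCircle (1:ℝ))) / n
        < b - a + ε := by
      have := abs_lt.mp hg_close
      linarith
    have hlow : (0:ℝ) ≤ (((Finset.Icc 1 n).filter (fun k => cond k)).card : ℝ) / n := by
      positivity
    rw [Real.dist_eq, abs_lt]
    constructor <;> [linarith; linarith]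
  · push_neg at hsmall
    obtain ⟨h, hh01, hhout, hhint⟩ := weyl_lower_fn ha hb
      (show (0:ℝ) < ε/4 by linarith) (by linarith)
    have hhtend := weyl_cont_avg_real x hx h
    rw [Metric.tendsto_atTop] at hhtend
    obtain ⟨N₂, hN₂⟩ := hhtend (ε/4) (by linarith)
    refine ⟨max (max N₁ N₂) 1, fun n hn => ?_⟩
    have hn1 : 1 ≤ n := le_trans (le_max_right _ _) hn
    have hnN₁ : N₁ ≤ n := le_trans ((le_max_left _ _).trans (le_max_left _ _)) hn
    have hnN₂ : N₂ ≤ n := le_trans ((le_max_right _ _).trans (le_max_left _ _)) hn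
    have hnpos : (0:ℝ) < n := by exact_mod_cast hn1
    have hupper : (((Finset.Icc 1 n).filter (fun k => cond k)).card : ℝ) / n
        ≤ (∑ k ∈ Finset.Icc 1 n, g (((k : ℝ) * x : ℝ) : AddCircle (1:ℝ))) / n := by
      apply div_le_div_of_nonneg_right ?_ hnpos.le
      rw [hcard]
      apply Finset.sum_le_sum
      intro k hk
      have hk0 : k ≠ 0 := by
        have := (Finset.mem_Icc.mp hk).1; omega
      by_cases hc : cond k
      · rw [if_pos hc]
        exact hgI _ ((hcondI k hk0).mp hc)
      · rw [if_neg hc]; exact hg0 _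
    have hlower : (∑ k ∈ Finset.Icc 1 n, h (((k : ℝ) * x : ℝ) : AddCircle (1:ℝ))) / n
        ≤ (((Finset.Icc 1 n).filter (fun k => cond k)).card : ℝ) / n := by
      apply div_le_div_of_nonneg_right ?_ hnpos.le
      rw [hcard]
      apply Finset.sum_le_sum
      intro k hk
      have hk0 : k ≠ 0 := by
        have := (Finset.mem_Icc.mp hk).1; omega
      by_cases hc : cond k
      · rw [if_pos hc]
        exact (hh01 _).2
      · rw [if_neg hc]
        rw [hhout _ (fun hmem => hc ((hcondI k hk0).mpr hmem))]
    have hg_close := hN₁ n hnN₁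
    have hh_close := hN₂ n hnN₂
    rw [Real.dist_eq] at hg_close hh_close
    have h1 := abs_lt.mp hg_close
    have h2 := abs_lt.mp hh_close
    rw [Real.dist_eq, abs_lt]
    constructor
    · -- lower: S/n > b - a - ε
      have : b - a - ε/2 ≤ ∫ y : AddCircle (1:ℝ), h y := by
        have := hhint; linarith
      linarith
    · linarith
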